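/- With ψ and ω as in the decomposition lemmas (ψ = −f e^{123} + e^1∧a^{23} + e^2∧a^{31} + e^3∧a^{12}, ω = K_{ij} a^i∧e^j), the 2-form ω is of type (1,1) with respect to the almost complex structure J_ψ induced by ψ if and only if the matrix K = (K_{ij}) is symmetric. -/
import Mathlib


noncomputable section

/-- `ℝ^6 ≅ ℂ³`; the coframe `{a^i}` plays the role of `{w^i} = {Im dz^i}` and `{e^i}`
the role of `{v^i} = {Re dz^i}` in the normal form of the decomposition lemmas. -/
abbrev V3 : Type := Fin 3 → ℂ

/-- `v^j = Re dz^j`. -/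
def vco (j : Fin 3) (x : V3) : ℝ := (x j).re

/-- `w^i = Im dz^i`. -/
def wco (i : Fin 3) (x : V3) : ℝ := (x i).im

/-- The 2-form `ω = Σ_{i,j} K_{ij} w^i ∧ v^j` (i.e. `Σ K_{ij} a^i ∧ e^j`), evaluated on
a pair of tangent vectors. -/
def omegaK (K : Matrix (Fin 3) (Fin 3) ℝ) (x y : V3) : ℝ :=
  ∑ i : Fin 3, ∑ j : Fin 3, K i j * (wco i x * vco j y - vco j x * wco i y)

/-- the 2-form `ω = Σ K_{ij} a^i ∧ e^j` is of type `(1,1)` for the almost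
complex structure `J_ψ` induced by `ψ` — pointwise, for the standard `J₀` on
`(ℝ^6, J₀) ≅ ℂ³`, i.e. `ω(J₀·, J₀·) = ω(·,·)` — if and only if `K` is symmetric. -/
theorem stmt_11 (K : Matrix (Fin 3) (Fin 3) ℝ) :
    (∀ x y : V3, omegaK K (Complex.I • x) (Complex.I • y) = omegaK K x y) ↔ K.IsSymm := by
  constructor
  · intro h
    rw [Matrix.IsSymm]
    ext a b
    have := h (fun k => if k = b then Complex.I else 0) (fun k => if k = a then 1 else 0)
    simp only [omegaK, wco, vco, Fin.sum_univ_three, Pi.smul_apply, smul_eq_mul] at this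
    fin_cases a <;> fin_cases b <;>
      simp_all [Fin.sum_univ_three, Complex.mul_re, Complex.mul_im]
  · intro hK x y
    simp only [omegaK, wco, vco, Fin.sum_univ_three, Pi.smul_apply, smul_eq_mul,
      Complex.mul_re, Complex.mul_im, Complex.I_re, Complex.I_im]
    have h01 := congrFun (congrFun hK 0) 1
    have h02 := congrFun (congrFun hK 0) 2
    have h12 := congrFun (congrFun hK 1) 2
    simp [Matrix.transpose_apply] at h01 h02 h12
    ring_nf
    rw [h01, h02, h12]
    ring
end
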